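/- The optimal value of the following semidefinite program equals 2/3: maximize (1/3)·Σ_{y∈{0,1,2}} ⟨φ_y|σ_y|φ_y⟩ over density matrices σ₀, σ₁, σ₂ on ℂ³ ⊗ ℂ³ subject to Tr_A(σ₀) = Tr_A(σ₁) = Tr_A(σ₂). Moreover, the optimum is attained by feasible σ₀, σ₁, σ₂ whose common marginal Tr_A(σ_y) equals (1/3)·1_{ℂ³}. (This is Alice's optimal probability of forcing any fixed outcome in the three-outcome die rolling protocol.) -/

import Mathlib

/-! STATEMENT 16: Alice's optimal probability of forcing any fixed outcome in the three-outcome die rolling protocol equals 2/3, attained with common marginal (1/3)·1. -/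

open Matrix
open scoped Matrix BigOperators ComplexOrder

noncomputable section

/-- Square matrices over ℂ indexed by `α`. -/
abbrev Mat (α : Type) : Type := Matrix α α ℂ

/-- A density matrix: positive semidefinite with unit trace. -/
def IsDensity {α : Type} [Fintype α] [DecidableEq α] (ρ : Mat α) : Prop :=
  ρ.PosSemidef ∧ ρ.trace = 1

/-- Hilbert–Schmidt inner product ⟨P, Q⟩ = Tr(P† Q). -/
def hs {α : Type} [Fintype α] (P Q : Mat α) : ℂ := (Pᴴ * Q).trace

/-- Outer product |v⟩⟨v|. -/
def outer {α : Type} (v : α → ℂ) : Mat α := fun i j => v i * star (v j)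

/-- Standard basis vector |i⟩. -/
def ket {α : Type} [DecidableEq α] (i : α) : α → ℂ := fun j => if j = i then 1 else 0

/-- The embedding of Fin 2 into Fin 3. -/
def f23 (y : Fin 2) : Fin 3 := ⟨y.val, by omega⟩

/-- |φ_y⟩ = (|yy⟩ + |22⟩)/√2 ∈ ℂ³ ⊗ ℂ³. -/
def phi (y : Fin 2) : Fin 3 × Fin 3 → ℂ :=
  fun p => (ket (f23 y, f23 y) p + ket ((2 : Fin 3), (2 : Fin 3)) p) / (Real.sqrt 2 : ℂ)

/-- Partial trace over the first tensor factor. -/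
def ptrA {α β : Type} [Fintype α] (ρ : Mat (α × β)) : Mat β :=
  fun b b' => ∑ a, ρ (a, b) (a, b')

/-- |φ₀⟩ = (|00⟩+|22⟩)/√2, |φ₁⟩ = (|11⟩+|22⟩)/√2, |φ₂⟩ = (|00⟩+|11⟩)/√2. -/
def phiD (y : Fin 3) : Fin 3 × Fin 3 → ℂ := fun p =>
  if y = 0 then (ket ((0 : Fin 3), (0 : Fin 3)) p + ket ((2 : Fin 3), (2 : Fin 3)) p) / (Real.sqrt 2 : ℂ)
  else if y = 1 then (ket ((1 : Fin 3), (1 : Fin 3)) p + ket ((2 : Fin 3), (2 : Fin 3)) p) / (Real.sqrt 2 : ℂ)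
  else (ket ((0 : Fin 3), (0 : Fin 3)) p + ket ((1 : Fin 3), (1 : Fin 3)) p) / (Real.sqrt 2 : ℂ)

/-! ### Auxiliary lemmas -/

section Helpers

variable {α : Type} [Fintype α] [DecidableEq α]

set_option linter.unusedSectionVars false
set_option maxHeartbeats 1000000

lemma outer_posSemidef (v : α → ℂ) : (outer v).PosSemidef := by
  apply Matrix.PosSemidef.of_dotProduct_mulVec_nonneg
  · ext i j; simp [outer, conjTranspose_apply, mul_comm]
  · intro x
    have : dotProduct (star x) (outer v *ᵥ x)
        = star (∑ j, star (v j) * x j) * (∑ j, star (v j) * x j) := by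
      simp only [dotProduct, mulVec, outer, Pi.star_apply, star_sum, star_mul', star_star]
      rw [Finset.sum_mul_sum]
      apply Finset.sum_congr rfl; intro i _
      rw [Finset.mul_sum]
      exact Finset.sum_congr rfl fun j _ => by ring
    rw [this]
    exact star_mul_self_nonneg _

lemma psd_add {P Q : Mat α} (hP : P.PosSemidef) (hQ : Q.PosSemidef) : (P + Q).PosSemidef := by
  refine .of_dotProduct_mulVec_nonneg (hP.1.add hQ.1) fun x => ?_
  rw [add_mulVec, dotProduct_add]
  exact add_nonneg (hP.dotProduct_mulVec_nonneg x) (hQ.dotProduct_mulVec_nonneg x)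

lemma psd_smul {P : Mat α} (hP : P.PosSemidef) {c : ℂ} (hc : 0 ≤ c) : (c • P).PosSemidef := by
  refine .of_dotProduct_mulVec_nonneg ?_ fun x => ?_
  · unfold Matrix.IsHermitian
    rw [conjTranspose_smul, hP.1.eq]
    have hsc : star c = c := Complex.conj_eq_iff_im.mpr ((Complex.le_def.mp hc).2.symm)
    rw [hsc]
  · rw [smul_mulVec, dotProduct_smul, smul_eq_mul]
    exact mul_nonneg hc (hP.dotProduct_mulVec_nonneg x)

lemma psd_trace_nonneg {P : Mat α} (hP : P.PosSemidef) : 0 ≤ P.trace := by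
  apply Finset.sum_nonneg
  intro i _
  have := hP.dotProduct_mulVec_nonneg (Pi.single i 1)
  simpa [mulVec_single, dotProduct, Pi.single_apply, Finset.sum_ite_eq'] using this

lemma hs_nonneg {P Q : Mat α} (hP : P.PosSemidef) (hQ : Q.PosSemidef) : 0 ≤ hs P Q := by
  obtain ⟨B, hB⟩ : ∃ B : Mat α, P = Bᴴ * B := by
    open scoped MatrixOrder in exact CStarAlgebra.nonneg_iff_eq_star_mul_self.mp hP.nonneg
  have h2 : hs P Q = (B * Q * Bᴴ).trace := by
    rw [hs, hP.1.eq, hB, Matrix.mul_assoc, Matrix.trace_mul_comm]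
  rw [h2]
  exact psd_trace_nonneg (hQ.mul_mul_conjTranspose_same B)

lemma hs_outer_outer (u w : α → ℂ) :
    hs (outer u) (outer w) = (∑ i, star (u i) * w i) * star (∑ i, star (u i) * w i) := by
  simp only [hs, Matrix.trace, Matrix.diag, Matrix.mul_apply, conjTranspose_apply, outer,
    star_mul', star_star, star_sum]
  rw [Finset.sum_mul_sum]
  rw [Finset.sum_comm]
  apply Finset.sum_congr rfl; intro p _
  apply Finset.sum_congr rfl; intro q _
  ring

lemma hs_smul_right (P Q : Mat α) (c : ℂ) : hs P (c • Q) = c * hs P Q := by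
  simp [hs, Matrix.mul_smul, smul_eq_mul]

lemma hs_add_right (P Q R : Mat α) : hs P (Q + R) = hs P Q + hs P R := by
  simp [hs, Matrix.mul_add]

lemma hs_sub_left (P Q R : Mat α) : hs (P - Q) R = hs P R - hs Q R := by
  simp [hs, conjTranspose_sub, Matrix.sub_mul]

lemma hs_smul_left (P Q : Mat α) (c : ℂ) : hs (c • P) Q = star c * hs P Q := by
  simp [hs, conjTranspose_smul, Matrix.smul_mul, smul_eq_mul]

lemma trace_outer (v : α → ℂ) : (outer v).trace = ∑ i, v i * star (v i) := by
  simp [Matrix.trace, Matrix.diag, outer]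

lemma hs_diagonal (d : α → ℂ) (σ : Mat α) :
    hs (diagonal d) σ = ∑ p, star (d p) * σ p p := by
  simp [hs, Matrix.diagonal_conjTranspose, Matrix.trace, Matrix.diag, Matrix.diagonal_mul]

lemma trace_ptrA {α β : Type} [Fintype α] [Fintype β] (σ : Mat (α × β)) :
    (ptrA σ).trace = σ.trace := by
  simp only [Matrix.trace, Matrix.diag, ptrA]
  exact (Fintype.sum_prod_type_right (f := fun p : α × β => σ p p)).symm

end Helpers

/-! ### Concrete data -/

def pa : Fin 3 → Fin 3 := ![0, 1, 0]
def pb : Fin 3 → Fin 3 := ![2, 2, 1]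
def mm : Fin 3 → Fin 3 := ![1, 0, 2]
@[simp] lemma pa0 : pa 0 = 0 := rfl
@[simp] lemma pa1 : pa 1 = 1 := rfl
@[simp] lemma pa2 : pa 2 = 0 := rfl
@[simp] lemma pb0 : pb 0 = 2 := rfl
@[simp] lemma pb1 : pb 1 = 2 := rfl
@[simp] lemma pb2 : pb 2 = 1 := rfl
@[simp] lemma mm0 : mm 0 = 1 := rfl
@[simp] lemma mm1 : mm 1 = 0 := rfl
@[simp] lemma mm2 : mm 2 = 2 := rfl

def psi (y : Fin 3) : Fin 3 × Fin 3 → ℂ := fun p => ket (pa y, pa y) p + ket (pb y, pb y) p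
def chi (y : Fin 3) : Fin 3 × Fin 3 → ℂ := fun p => ket (pa y, pa y) p - ket (pb y, pb y) p

lemma sqrt2_mul_self : ((Real.sqrt 2 : ℂ)) * star ((Real.sqrt 2 : ℂ)) = 2 := by
  rw [Complex.star_def, Complex.conj_ofReal, ← Complex.ofReal_mul,
    Real.mul_self_sqrt (by norm_num : (0:ℝ) ≤ 2)]
  norm_num

lemma outer_phiD (y : Fin 3) : outer (phiD y) = (2:ℂ)⁻¹ • outer (psi y) := by
  have key : ∀ u v : Fin 3 × Fin 3 → ℂ,
      outer (fun p => (u p + v p) / (Real.sqrt 2 : ℂ)) = (2:ℂ)⁻¹ • outer (fun p => u p + v p) := by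
    intro u v
    funext i j
    simp only [outer, Matrix.smul_apply, smul_eq_mul, div_mul_div_comm, star_div₀]
    rw [sqrt2_mul_self, div_eq_mul_inv, mul_comm]
  fin_cases y
  · exact key (ket ((0:Fin 3),(0:Fin 3))) (ket ((2:Fin 3),(2:Fin 3)))
  · exact key (ket ((1:Fin 3),(1:Fin 3))) (ket ((2:Fin 3),(2:Fin 3)))
  · exact key (ket ((0:Fin 3),(0:Fin 3))) (ket ((1:Fin 3),(1:Fin 3)))

/-- The optimal cheating strategies. -/
def sigOpt (y : Fin 3) : Mat (Fin 3 × Fin 3) :=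
  (2/3 : ℂ) • outer (phiD y) + (3 : ℂ)⁻¹ • outer (ket (mm y, mm y))

lemma nonneg_23 : (0:ℂ) ≤ (2/3 : ℂ) := by
  rw [Complex.le_def]; norm_num

lemma nonneg_3inv : (0:ℂ) ≤ (3 : ℂ)⁻¹ := by
  rw [Complex.le_def]; norm_num

lemma nonneg_2inv : (0:ℂ) ≤ (2 : ℂ)⁻¹ := by
  rw [Complex.le_def]; norm_num

lemma sigOpt_posSemidef (y : Fin 3) : (sigOpt y).PosSemidef :=
  psd_add (psd_smul (outer_posSemidef _) nonneg_23) (psd_smul (outer_posSemidef _) nonneg_3inv)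

lemma trace_outer_psi (y : Fin 3) : (outer (psi y)).trace = 2 := by
  rw [trace_outer]
  fin_cases y <;>
    (simp [psi, ket, Fintype.sum_prod_type, Fin.sum_univ_succ, Prod.ext_iff]; norm_num)

lemma trace_outer_ket (i : Fin 3 × Fin 3) : (outer (ket i)).trace = 1 := by
  rw [trace_outer]
  simp [ket, Finset.sum_ite_eq', apply_ite]

lemma sigOpt_trace (y : Fin 3) : (sigOpt y).trace = 1 := by
  rw [sigOpt, Matrix.trace_add, Matrix.trace_smul, Matrix.trace_smul, outer_phiD,
    Matrix.trace_smul, trace_outer_psi, trace_outer_ket]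
  simp [smul_eq_mul]
  norm_num

lemma ptrA_add {α β : Type} [Fintype α] [Fintype β] (P Q : Mat (α × β)) :
    ptrA (P + Q) = ptrA P + ptrA Q := by
  funext b b'; simp [ptrA, Finset.sum_add_distrib]

lemma ptrA_smul {α β : Type} [Fintype α] [Fintype β] (c : ℂ) (P : Mat (α × β)) :
    ptrA (c • P) = c • ptrA P := by
  funext b b'; simp [ptrA, Finset.mul_sum]

lemma ptrA_outer_psi (y : Fin 3) :
    ptrA (outer (psi y)) = diagonal (fun b => if b = pa y ∨ b = pb y then 1 else 0) := by
  fin_cases y <;> funext b b' <;> fin_cases b <;> fin_cases b' <;>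
    simp [ptrA, outer, psi, ket, Fin.sum_univ_three, Prod.ext_iff, Matrix.diagonal_apply]

lemma ptrA_outer_ket (y : Fin 3) :
    ptrA (outer (ket (mm y, mm y))) = diagonal (fun b => if b = mm y then 1 else 0) := by
  fin_cases y <;> funext b b' <;> fin_cases b <;> fin_cases b' <;>
    simp [ptrA, outer, ket, Fin.sum_univ_three, Prod.ext_iff, Matrix.diagonal_apply]

lemma sigOpt_ptrA (y : Fin 3) : ptrA (sigOpt y) = (1/3 : ℂ) • (1 : Mat (Fin 3)) := by
  rw [sigOpt, outer_phiD, ptrA_add, ptrA_smul, ptrA_smul, ptrA_smul,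
    ptrA_outer_psi, ptrA_outer_ket]
  fin_cases y <;> funext b b' <;> fin_cases b <;> fin_cases b' <;>
    simp [Matrix.diagonal_apply, Matrix.one_apply, smul_eq_mul] <;> norm_num

lemma hs_value (y : Fin 3) : hs (outer (phiD y)) (sigOpt y) = 2/3 := by
  rw [sigOpt, outer_phiD, hs_add_right, hs_smul_right, hs_smul_right, hs_smul_left,
    hs_smul_right, hs_smul_left]
  rw [hs_outer_outer, hs_outer_outer]
  have h1 : (∑ i, star (psi y i) * psi y i) = 2 := by
    fin_cases y <;>
      (simp [psi, ket, Fintype.sum_prod_type, Fin.sum_univ_succ, Prod.ext_iff]; norm_num)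
  have h2 : (∑ i, star (psi y i) * ket (mm y, mm y) i) = 0 := by
    fin_cases y <;>
      simp [psi, ket, Fintype.sum_prod_type, Fin.sum_univ_succ, Prod.ext_iff]
  rw [h1, h2]
  norm_num

/-! ### The dual certificate -/

def Dg (y : Fin 3) : Mat (Fin 3 × Fin 3) :=
  diagonal (fun p => if p.2 = mm y then 0 else 1)

def ee (y : Fin 3) : Fin 3 × Fin 3 → ℂ :=
  fun p => if p.2 = mm y ∨ p = (pa y, pa y) ∨ p = (pb y, pb y) then 0 else 1

set_option maxHeartbeats 2000000 in
lemma Dg_decomp (y : Fin 3) :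
    Dg y - outer (phiD y) = (2:ℂ)⁻¹ • outer (chi y) + diagonal (ee y) := by
  rw [outer_phiD]
  funext i j
  obtain ⟨i1, i2⟩ := i
  obtain ⟨j1, j2⟩ := j
  fin_cases y <;> fin_cases i1 <;> fin_cases i2 <;> fin_cases j1 <;> fin_cases j2 <;>
    simp [Dg, ee, outer, psi, chi, ket, Matrix.diagonal_apply, Prod.ext_iff,
      smul_eq_mul, Matrix.sub_apply] <;> norm_num

lemma Dg_sub_psd (y : Fin 3) : (Dg y - outer (phiD y)).PosSemidef := by
  rw [Dg_decomp]
  refine psd_add (psd_smul (outer_posSemidef _) nonneg_2inv) (Matrix.PosSemidef.diagonal ?_)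
  intro p
  unfold ee
  split_ifs <;> simp [Complex.le_def]

lemma hs_Dg (y : Fin 3) (σ : Mat (Fin 3 × Fin 3)) :
    hs (Dg y) σ = ∑ b, (if b = mm y then 0 else 1) * ptrA σ b b := by
  rw [Dg, hs_diagonal]
  rw [Fintype.sum_prod_type_right]
  apply Finset.sum_congr rfl; intro b _
  rw [ptrA, Finset.mul_sum]
  apply Finset.sum_congr rfl; intro a _
  split_ifs <;> simp

theorem die_rolling_cheating_Alice :
    IsGreatest
      {x : ℝ | ∃ σ0 σ1 σ2 : Mat (Fin 3 × Fin 3),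
        IsDensity σ0 ∧ IsDensity σ1 ∧ IsDensity σ2 ∧
        ptrA σ0 = ptrA σ1 ∧ ptrA σ1 = ptrA σ2 ∧
        x = ((1/3 : ℂ) * (hs (outer (phiD 0)) σ0 + hs (outer (phiD 1)) σ1
            + hs (outer (phiD 2)) σ2)).re}
      (2/3)
    ∧ ∃ σ0 σ1 σ2 : Mat (Fin 3 × Fin 3),
        IsDensity σ0 ∧ IsDensity σ1 ∧ IsDensity σ2 ∧
        ptrA σ0 = ptrA σ1 ∧ ptrA σ1 = ptrA σ2 ∧
        ptrA σ0 = (1/3 : ℂ) • (1 : Mat (Fin 3)) ∧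
        ((1/3 : ℂ) * (hs (outer (phiD 0)) σ0 + hs (outer (phiD 1)) σ1
          + hs (outer (phiD 2)) σ2)).re = 2/3 := by
  have hval : ((1/3 : ℂ) * (hs (outer (phiD 0)) (sigOpt 0) + hs (outer (phiD 1)) (sigOpt 1)
      + hs (outer (phiD 2)) (sigOpt 2))).re = 2/3 := by
    rw [hs_value, hs_value, hs_value]
    norm_num
  have hdens : ∀ y, IsDensity (sigOpt y) := fun y => ⟨sigOpt_posSemidef y, sigOpt_trace y⟩
  constructor
  · constructor
    · -- membership
      exact ⟨sigOpt 0, sigOpt 1, sigOpt 2, hdens 0, hdens 1, hdens 2,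
        (sigOpt_ptrA 0).trans (sigOpt_ptrA 1).symm,
        (sigOpt_ptrA 1).trans (sigOpt_ptrA 2).symm, hval.symm⟩
    · -- upper bound
      rintro x ⟨σ0, σ1, σ2, h0, h1, h2, he01, he12, hx⟩
      -- each term is bounded by the dual
      have key : ∀ (y : Fin 3) (σ : Mat (Fin 3 × Fin 3)), σ.PosSemidef →
          (hs (outer (phiD y)) σ).re ≤ (hs (Dg y) σ).re := by
        intro y σ hσ
        have h := hs_nonneg (Dg_sub_psd y) hσ
        rw [hs_sub_left] at h
        have := (Complex.le_def.mp h).1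
        simp only [Complex.zero_re, Complex.sub_re] at this
        linarith
      set ρ := ptrA σ0 with hρ
      have hρtr : ρ.trace = 1 := by rw [hρ, trace_ptrA, h0.2]
      have hD0 : hs (Dg 0) σ0 = ρ 0 0 + ρ 2 2 := by
        rw [hs_Dg, Fin.sum_univ_three, ← hρ]
        simp
      have hD1 : hs (Dg 1) σ1 = ρ 1 1 + ρ 2 2 := by
        rw [hs_Dg, Fin.sum_univ_three, ← he01]
        simp
      have hD2 : hs (Dg 2) σ2 = ρ 0 0 + ρ 1 1 := by
        rw [hs_Dg, Fin.sum_univ_three, ← he12, ← he01]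
        simp
      have hsum : (hs (Dg 0) σ0).re + (hs (Dg 1) σ1).re + (hs (Dg 2) σ2).re = 2 := by
        have : hs (Dg 0) σ0 + hs (Dg 1) σ1 + hs (Dg 2) σ2 = 2 * ρ.trace := by
          rw [hD0, hD1, hD2, Matrix.trace, Fin.sum_univ_three]
          simp [Matrix.diag]
          ring
        have h2 : (hs (Dg 0) σ0 + hs (Dg 1) σ1 + hs (Dg 2) σ2).re = 2 := by
          rw [this, hρtr]
          norm_num
        simpa [Complex.add_re] using h2
      rw [hx]
      rw [show (1/3 : ℂ) = ((1/3 : ℝ) : ℂ) by norm_num]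
      rw [Complex.re_ofReal_mul]
      have hb0 := key 0 σ0 h0.1
      have hb1 := key 1 σ1 h1.1
      have hb2 := key 2 σ2 h2.1
      simp only [Complex.add_re]
      linarith
  · exact ⟨sigOpt 0, sigOpt 1, sigOpt 2, hdens 0, hdens 1, hdens 2,
      (sigOpt_ptrA 0).trans (sigOpt_ptrA 1).symm,
      (sigOpt_ptrA 1).trans (sigOpt_ptrA 2).symm, sigOpt_ptrA 0, hval⟩

end
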